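/- Let n ≥ 2 and let A be a real symmetric n×n matrix. Then A is scaled diagonally dominant if and only if A can be written as A = Σ_{i<j} M^{ij}, where for each pair i < j the matrix M^{ij} is a real symmetric n×n matrix that is zero everywhere except possibly in the entries (i,i), (i,j), (j,i), (j,j), and whose 2×2 submatrix [[M^{ij}_{ii}, M^{ij}_{ij}], [M^{ij}_{ji}, M^{ij}_{jj}]] is symmetric positive semidefinite. -/

import Mathlib

open scoped Matrix

/-- A real matrix is diagonally dominant if `A i i ≥ ∑_{j ≠ i} |A i j|` for every `i`. -/
def IsDiagDom {n : ℕ} (A : Matrix (Fin n) (Fin n) ℝ) : Prop :=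
  ∀ i, ∑ j ∈ Finset.univ.filter (fun j => j ≠ i), |A i j| ≤ A i i

/-- A real matrix is scaled diagonally dominant if there is a diagonal matrix `D` with
positive diagonal entries such that `D A D` is diagonally dominant. -/
def IsScaledDiagDom {n : ℕ} (A : Matrix (Fin n) (Fin n) ℝ) : Prop :=
  ∃ d : Fin n → ℝ, (∀ i, 0 < d i) ∧
    IsDiagDom (Matrix.diagonal d * A * Matrix.diagonal d)

lemma qform_cons {n : ℕ} (B : Matrix (Fin (n+1)) (Fin (n+1)) ℝ) (c : ℝ) (y : Fin n → ℝ) :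
    ∑ i, ∑ j, (Fin.cons c y : Fin (n+1) → ℝ) i * B i j * (Fin.cons c y : Fin (n+1) → ℝ) j
      = c * B 0 0 * c + c * ∑ j, B 0 j.succ * y j + (∑ i, y i * B i.succ 0) * c
        + ∑ i, ∑ j, y i * B i.succ j.succ * y j := by
  rw [Fin.sum_univ_succ]
  simp [Fin.sum_univ_succ, Finset.mul_sum, Finset.sum_add_distrib, mul_assoc, mul_comm, mul_left_comm, add_assoc]

/-- two-point quadratic form -/
lemma qform_two {n : ℕ} (B : Matrix (Fin n) (Fin n) ℝ)
    (hpsd : ∀ x : Fin n → ℝ, 0 ≤ ∑ i, ∑ j, x i * B i j * x j)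
    (i j : Fin n) (s t : ℝ) :
    0 ≤ s * s * B i i + s * t * B i j + t * s * B j i + t * t * B j j := by
  have := hpsd (fun k => (if k = i then s else 0) + (if k = j then t else 0))
  calc (0:ℝ) ≤ _ := this
    _ = s * s * B i i + s * t * B i j + t * s * B j i + t * t * B j j := by
      simp [add_mul, mul_add, ite_mul, mul_ite, Finset.sum_add_distrib,
        Finset.sum_ite_eq']
      ring

lemma exists_pos_mulVec_nonneg : ∀ (n : ℕ) (B : Matrix (Fin n) (Fin n) ℝ),
    (∀ i j, B i j = B j i) → (∀ i j, i ≠ j → B i j ≤ 0) →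
    (∀ x : Fin n → ℝ, 0 ≤ ∑ i, ∑ j, x i * B i j * x j) →
    ∃ d : Fin n → ℝ, (∀ i, 0 < d i) ∧ ∀ i, 0 ≤ ∑ j, B i j * d j := by
  intro n
  induction n with
  | zero => exact fun B _ _ _ => ⟨fun i => 1, fun i => i.elim0, fun i => i.elim0⟩
  | succ n ih =>
    intro B hsym hoff hpsd
    have ha : 0 ≤ B 0 0 := by
      have := qform_two B hpsd 0 0 1 0; linarith
    set a := B 0 0 with ha'
    set b : Fin n → ℝ := fun i => B i.succ 0 with hbdef
    have hb0 : ∀ i, b i ≤ 0 := fun i => hoff i.succ 0 (Fin.succ_ne_zero i)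
    have hb0' : ∀ j : Fin n, B 0 j.succ = b j := fun j => hsym 0 j.succ
    by_cases haz : a = 0
    · -- zero first row
      have hrow0 : ∀ j, b j = 0 := by
        intro j
        have hbj : B j.succ 0 = b j := rfl
        have hq : ∀ s : ℝ, 0 ≤ 2 * (s * b j) + B j.succ j.succ := by
          intro s
          have h := qform_two B hpsd 0 j.succ s 1
          rw [hb0' j, ← ha', haz, hbj] at h
          ring_nf at h ⊢
          linarith [h]
        by_contra hne
        have h1 := hq (-(B j.succ j.succ + 1)/(2 * b j))
        have h2 : 2 * (-(B j.succ j.succ + 1)/(2 * b j) * b j) = -(B j.succ j.succ + 1) := by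
          field_simp
        rw [h2] at h1
        linarith
      have hB' := ih (fun i j => B i.succ j.succ) (fun i j => hsym _ _)
        (fun i j hij => hoff _ _ (fun h => hij (Fin.succ_injective n h)))
        (fun y => by
          have := hpsd (Fin.cons 0 y)
          rw [qform_cons] at this
          simpa using this)
      obtain ⟨d', hd'pos, hd'row⟩ := hB'
      refine ⟨Fin.cons 1 d', fun i => ?_, fun i => ?_⟩
      · refine Fin.cases ?_ ?_ i
        · simp
        · intro k; simpa using hd'pos k
      · refine Fin.cases ?_ ?_ i
        · rw [Fin.sum_univ_succ]
          simp only [Fin.cons_zero, Fin.cons_succ]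
          rw [← ha', haz]
          have : ∀ j : Fin n, B 0 j.succ * d' j = 0 := by
            intro j; rw [hb0' j, hrow0 j, zero_mul]
          simp [this]
        · intro k
          rw [Fin.sum_univ_succ]
          simp only [Fin.cons_zero, Fin.cons_succ]
          have hbk : B k.succ 0 = 0 := hrow0 k
          rw [hbk]
          simpa using hd'row k
    · have hapos : 0 < a := lt_of_le_of_ne ha (Ne.symm haz)
      set S : Matrix (Fin n) (Fin n) ℝ := fun i j => B i.succ j.succ - b i * b j / a with hSdef
      have hSsym : ∀ i j, S i j = S j i := by
        intro i j; simp only [hSdef]; rw [hsym i.succ j.succ]; ring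
      have hSoff : ∀ i j, i ≠ j → S i j ≤ 0 := by
        intro i j hij
        have h1 : B i.succ j.succ ≤ 0 := hoff _ _ (fun h => hij (Fin.succ_injective n h))
        have h2 : 0 ≤ b i * b j / a :=
          div_nonneg (by nlinarith [hb0 i, hb0 j]) hapos.le
        simp only [hSdef]; linarith
      have hkey : ∀ y : Fin n → ℝ, ∑ i, ∑ j, y i * S i j * y j
          = (∑ i, ∑ j, y i * B i.succ j.succ * y j)
            - (∑ i, y i * b i) * (∑ j, b j * y j) / a := by
        intro y
        have e1 : ∀ i : Fin n, ∑ j, y i * S i j * y j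
            = (∑ j, y i * B i.succ j.succ * y j) - (y i * b i) * (∑ j, b j * y j) / a := by
          intro i
          have e0 : ∀ j : Fin n, y i * S i j * y j
              = y i * B i.succ j.succ * y j - (y i * b i) * (b j * y j) / a := by
            intro j; simp only [hSdef]; ring
          simp only [e0]
          rw [Finset.sum_sub_distrib]
          congr 1
          rw [Finset.mul_sum, Finset.sum_div]
        simp only [e1]
        rw [Finset.sum_sub_distrib]
        congr 1
        rw [Finset.sum_mul, Finset.sum_div]
      have hSpsd : ∀ y : Fin n → ℝ, 0 ≤ ∑ i, ∑ j, y i * S i j * y j := by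
        intro y
        set σ : ℝ := ∑ j, b j * y j with hσ
        have hyb : (∑ i, y i * b i) = σ := by
          rw [hσ]; exact Finset.sum_congr rfl (fun i _ => mul_comm _ _)
        have h := hpsd (Fin.cons (-σ/a) y)
        rw [qform_cons] at h
        have hb0'' : (∑ j, B 0 j.succ * y j) = σ := by
          rw [hσ]; exact Finset.sum_congr rfl (fun j _ => by rw [hb0' j])
        have hyb' : (∑ i, y i * B i.succ 0) = σ := by
          rw [hσ]; exact Finset.sum_congr rfl (fun i _ => mul_comm _ _)
        rw [hb0'', hyb', ← ha'] at h
        rw [hkey y, hyb]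
        have expand : -σ/a * a * (-σ/a) + -σ/a * σ + σ * (-σ/a) = -(σ * σ / a) := by
          field_simp
          ring
        linarith [h, expand.symm ▸ h]
      obtain ⟨d', hd'pos, hd'row⟩ := ih S hSsym hSoff hSpsd
      set r : ℝ := -(∑ i, b i * d' i)/a with hr
      have hsum_nonpos : (∑ i, b i * d' i) ≤ 0 :=
        Finset.sum_nonpos (fun i _ => mul_nonpos_of_nonpos_of_nonneg (hb0 i) (hd'pos i).le)
      have hr0 : 0 ≤ r := div_nonneg (by linarith) hapos.le
      set d0 : ℝ := if r = 0 then 1 else r with hd0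
      have hd0pos : 0 < d0 := by
        rw [hd0]; split
        · exact one_pos
        · exact lt_of_le_of_ne hr0 (Ne.symm (by assumption))
      have hd0r : r ≤ d0 := by
        rw [hd0]; split
        · next h => rw [h]; exact zero_le_one
        · exact le_refl _
      have hbzero : r = 0 → ∀ i, b i = 0 := by
        intro hrz i
        have hzero : (∑ i, b i * d' i) = 0 := by
          have : (-∑ i, b i * d' i) = r * a := by rw [hr]; field_simp
          rw [hrz, zero_mul] at this; linarith
        have := (Finset.sum_eq_zero_iff_of_nonpos
          (fun i _ => mul_nonpos_of_nonpos_of_nonneg (hb0 i) (hd'pos i).le)).mp hzero i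
          (Finset.mem_univ i)
        have hd := hd'pos i
        rcases mul_eq_zero.mp this with h | h
        · exact h
        · exact absurd h (ne_of_gt hd)
      refine ⟨Fin.cons d0 d', fun i => ?_, fun i => ?_⟩
      · refine Fin.cases ?_ ?_ i
        · simpa using hd0pos
        · intro k; simpa using hd'pos k
      · refine Fin.cases ?_ ?_ i
        · rw [Fin.sum_univ_succ]
          simp only [Fin.cons_zero, Fin.cons_succ]
          have e : (∑ j, B 0 j.succ * d' j) = -(r * a) := by
            rw [hr]
            have : (∑ j, B 0 j.succ * d' j) = ∑ j, b j * d' j :=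
              Finset.sum_congr rfl (fun j _ => by rw [hb0' j])
            rw [this]; field_simp
          rw [e, ← ha']
          nlinarith [mul_le_mul_of_nonneg_left hd0r ha]
        · intro k
          rw [Fin.sum_univ_succ]
          simp only [Fin.cons_zero, Fin.cons_succ]
          have eS : (∑ j, B k.succ j.succ * d' j)
              = (∑ j, S k j * d' j) + b k * (∑ j, b j * d' j) / a := by
            have e0 : ∀ j : Fin n, B k.succ j.succ * d' j
                = S k j * d' j + b k * (b j * d' j) / a := by
              intro j; simp only [hSdef]; ring
            simp only [e0]
            rw [Finset.sum_add_distrib]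
            congr 1
            rw [Finset.mul_sum, Finset.sum_div]
          have hBk0 : B k.succ 0 = b k := rfl
          rw [eS, hBk0]
          have hbd : b k * (∑ j, b j * d' j) / a = -(b k * r) := by
            rw [hr]; field_simp
          rw [hbd]
          by_cases hrz : r = 0
          · rw [hbzero hrz k]
            simpa using hd'row k
          · have hd0eq : d0 = r := by rw [hd0, if_neg hrz]
            rw [hd0eq]
            have := hd'row k
            linarith

lemma pair_sum {n : ℕ} (g : Fin n → Fin n → ℝ) :
    ∑ p ∈ Finset.univ.filter (fun p : Fin n × Fin n => p.1 < p.2), g p.1 p.2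
      = ∑ i, ∑ j, if i < j then g i j else 0 := by
  rw [Finset.sum_filter, ← Finset.univ_product_univ, Finset.sum_product]

lemma sum_split {n : ℕ} (g : Fin n → Fin n → ℝ) :
    ∑ i, ∑ j, g i j
      = (∑ i, g i i) + ∑ i, ∑ j, if i < j then g i j + g j i else 0 := by
  have e : ∀ i j : Fin n, g i j = (if i < j then g i j else 0) + (if i = j then g i j else 0)
      + (if j < i then g i j else 0) := by
    intro i j
    rcases lt_trichotomy i j with h | h | h
    · simp [h, h.ne, h.asymm]
    · simp [h, lt_irrefl]
    · simp [h, not_lt.mpr (le_of_lt h), h.ne', h.asymm]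
  have h1 : ∑ i, ∑ j, g i j = ((∑ i, ∑ j, if i < j then g i j else 0)
      + (∑ i, ∑ j, if i = j then g i j else 0))
      + (∑ i : Fin n, ∑ j, if j < i then g i j else 0) := by
    simp only [← Finset.sum_add_distrib]
    exact Finset.sum_congr rfl fun i _ => Finset.sum_congr rfl fun j _ => e i j
  have h2 : (∑ i : Fin n, ∑ j, if i = j then g i j else 0) = ∑ i, g i i := by
    simp [Finset.sum_ite_eq]
  have h3 : (∑ i : Fin n, ∑ j, if j < i then g i j else 0)
      = ∑ i : Fin n, ∑ j, if i < j then g j i else 0 :=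
    Finset.sum_comm
  have h4 : (∑ i : Fin n, ∑ j, if i < j then g i j else 0)
      + (∑ i : Fin n, ∑ j, if i < j then g j i else 0)
      = ∑ i : Fin n, ∑ j, if i < j then g i j + g j i else 0 := by
    simp only [← Finset.sum_add_distrib]
    exact Finset.sum_congr rfl fun i _ => Finset.sum_congr rfl fun j _ => by
      split <;> simp
  rw [h1, h2, h3]
  linarith [h4]

lemma two_support_sum {n : ℕ} (f : Fin n → ℝ) (i j : Fin n) (hij : i ≠ j)
    (h : ∀ k, k ≠ i → k ≠ j → f k = 0) : ∑ k, f k = f i + f j := by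
  have e : ∀ k, f k = (if k = i then f i else 0) + (if k = j then f j else 0) := by
    intro k
    by_cases h1 : k = i
    · subst h1; simp [hij]
    · by_cases h2 : k = j
      · subst h2; simp [h1]
      · simp [h1, h2, h k h1 h2]
  rw [Finset.sum_congr rfl fun k _ => e k, Finset.sum_add_distrib]
  simp [Finset.sum_ite_eq']

set_option maxHeartbeats 1000000

/-- A real symmetric matrix (`n ≥ 2`) is scaled diagonally dominant if and only if it is a
sum over pairs `i < j` of symmetric matrices `M^{ij}` supported on the entries
`(i,i), (i,j), (j,i), (j,j)` whose corresponding `2×2` submatrices are positive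
semidefinite. -/
theorem isScaledDiagDom_iff_sum_psd_2x2 {n : ℕ} (hn : 2 ≤ n)
    (A : Matrix (Fin n) (Fin n) ℝ) (hA : A.IsSymm) :
    IsScaledDiagDom A ↔
      ∃ M : Fin n → Fin n → Matrix (Fin n) (Fin n) ℝ,
        (∀ i j, i < j → (M i j).IsSymm) ∧
        (∀ i j, i < j → ∀ k l, ¬((k = i ∨ k = j) ∧ (l = i ∨ l = j)) → M i j k l = 0) ∧
        (∀ i j, i < j → ∀ s t : ℝ,
          0 ≤ s * s * M i j i i + s * t * M i j i j + t * s * M i j j i + t * t * M i j j j) ∧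
        A = ∑ p ∈ Finset.univ.filter (fun p : Fin n × Fin n => p.1 < p.2), M p.1 p.2 := by
  have hApp : ∀ k l : Fin n, A l k = A k l := fun k l => hA.apply k l
  have hcard : ((Finset.univ : Finset (Fin n)).erase · |> (fun _ => True)) = fun _ => True := rfl
  have hN1 : (0:ℝ) < (n : ℝ) - 1 := by
    have : (2:ℝ) ≤ (n:ℝ) := by exact_mod_cast hn
    linarith
  constructor
  · rintro ⟨d, hd, hdd⟩
    have hrow : ∀ i, ∑ j ∈ Finset.univ.erase i, d j * |A i j| ≤ d i * A i i := by
      intro i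
      have h := hdd i
      rw [Finset.filter_ne'] at h
      have e1 : ∀ j : Fin n, |(Matrix.diagonal d * A * Matrix.diagonal d) i j|
          = d i * (d j * |A i j|) := by
        intro j
        rw [Matrix.mul_diagonal, Matrix.diagonal_mul, abs_mul, abs_mul,
          abs_of_pos (hd i), abs_of_pos (hd j)]
        ring
      rw [Finset.sum_congr rfl (fun j _ => e1 j), ← Finset.mul_sum,
        Matrix.mul_diagonal, Matrix.diagonal_mul] at h
      have hd2 : d i * (∑ j ∈ Finset.univ.erase i, d j * |A i j|) ≤ d i * (d i * A i i) := by
        calc d i * ∑ j ∈ Finset.univ.erase i, d j * |A i j| ≤ d i * A i i * d i := h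
          _ = d i * (d i * A i i) := by ring
      exact (mul_le_mul_iff_right₀ (hd i)).mp hd2
    set e : Fin n → ℝ := fun i =>
      (d i * A i i - ∑ m ∈ Finset.univ.erase i, d m * |A i m|) / (((n:ℝ) - 1) * d i)
      with hedef
    have he : ∀ i, 0 ≤ e i := by
      intro i
      apply div_nonneg _ (mul_pos hN1 (hd i)).le
      have := hrow i
      linarith
    set M : Fin n → Fin n → Matrix (Fin n) (Fin n) ℝ := fun i j => Matrix.of fun k l =>
      if k = i ∧ l = i then |A i j| * d j / d i + e i
      else if k = j ∧ l = j then |A i j| * d i / d j + e j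
      else if (k = i ∧ l = j) ∨ (k = j ∧ l = i) then A i j
      else 0
      with hMdef
    have hMii : ∀ i j, i ≠ j → M i j i i = |A i j| * d j / d i + e i := by
      intro i j hij; simp [hMdef, Matrix.of_apply]
    have hMjj : ∀ i j, i ≠ j → M i j j j = |A i j| * d i / d j + e j := by
      intro i j hij; simp [hMdef, Matrix.of_apply, hij, Ne.symm hij]
    have hMij : ∀ i j, i ≠ j → M i j i j = A i j := by
      intro i j hij; simp [hMdef, Matrix.of_apply, hij, Ne.symm hij]
    have hMji : ∀ i j, i ≠ j → M i j j i = A i j := by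
      intro i j hij; simp [hMdef, Matrix.of_apply, hij, Ne.symm hij]
    have hM0 : ∀ i j k l, ¬((k = i ∨ k = j) ∧ (l = i ∨ l = j)) → M i j k l = 0 := by
      intro i j k l hkl
      simp only [hMdef, Matrix.of_apply]
      split_ifs <;> tauto
    refine ⟨M, ?_, fun i j _ => hM0 i j, ?_, ?_⟩
    · -- symmetry
      intro i j hij
      have hij' := ne_of_lt hij
      unfold Matrix.IsSymm
      ext k l
      rw [Matrix.transpose_apply]
      simp only [hMdef, Matrix.of_apply]
      split_ifs <;> first
        | rfl
        | tauto
    · -- 2x2 psd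
      intro i j hij s t
      have hij' := ne_of_lt hij
      rw [hMii i j hij', hMjj i j hij', hMij i j hij', hMji i j hij']
      have hdi := hd i
      have hdj := hd j
      have hei := he i
      have hej := he j
      rw [← mul_nonneg_iff_of_pos_right (mul_pos hdi hdj)]
      have expand : (s * s * (|A i j| * d j / d i + e i) + s * t * A i j + t * s * A i j
            + t * t * (|A i j| * d i / d j + e j)) * (d i * d j)
          = s * s * |A i j| * (d j * d j) + 2 * (s * t * A i j * (d i * d j))
            + t * t * |A i j| * (d i * d i)
            + s * s * e i * (d i * d j) + t * t * e j * (d i * d j) := by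
        field_simp
        ring
      rw [expand]
      rcases abs_cases (A i j) with ⟨h1, h2⟩ | ⟨h1, h2⟩ <;> rw [h1] <;>
        nlinarith [sq_nonneg (s * d j + t * d i), sq_nonneg (s * d j - t * d i),
          mul_nonneg (mul_nonneg (mul_self_nonneg s) hei) (mul_pos hdi hdj).le,
          mul_nonneg (mul_nonneg (mul_self_nonneg t) hej) (mul_pos hdi hdj).le]
    · -- sum identity
      apply Matrix.ext
      intro k l
      rw [Matrix.sum_apply, pair_sum (fun i j => M i j k l)]
      by_cases hkl : k = l
      · subst hkl
        have step1 : ∀ i j : Fin n, (if i < j then M i j k k else 0)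
            = (if k = i ∧ i < j then d j * |A k j| / d k + e k else 0)
              + (if k = j ∧ i < j then d i * |A k i| / d k + e k else 0) := by
          intro i j
          by_cases hij : i < j
          · have hne := ne_of_lt hij
            by_cases h1 : k = i
            · subst h1
              rw [if_pos hij, if_pos ⟨rfl, hij⟩,
                if_neg (fun h => hne h.1), hMii k j hne, add_zero]
              ring_nf
            · by_cases h2 : k = j
              · subst h2
                rw [if_pos hij, if_neg (fun h => h1 h.1), if_pos ⟨rfl, hij⟩,
                  hMjj i k hne, zero_add, hApp]
                ring_nf
              · rw [if_pos hij, if_neg (fun h => h1 h.1), if_neg (fun h => h2 h.1),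
                  hM0 i j k k (by tauto), add_zero]
          · simp [hij]
        rw [Finset.sum_congr rfl fun i _ => Finset.sum_congr rfl fun j _ => step1 i j]
        simp only [Finset.sum_add_distrib]
        have hP : (∑ i, ∑ j, if k = i ∧ i < j then d j * |A k j| / d k + e k else 0)
            = ∑ m, if k < m then d m * |A k m| / d k + e k else 0 := by
          have : ∀ i : Fin n, (∑ j, if k = i ∧ i < j then d j * |A k j| / d k + e k else 0)
              = if k = i then (∑ j, if i < j then d j * |A k j| / d k + e k else 0) else 0 := by
            intro i
            by_cases h : k = i
            · simp [h]
            · simp [h]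
          rw [Finset.sum_congr rfl fun i _ => this i, Finset.sum_ite_eq]
          simp
        have hQ : (∑ i, ∑ j, if k = j ∧ i < j then d i * |A k i| / d k + e k else 0)
            = ∑ m, if m < k then d m * |A k m| / d k + e k else 0 := by
          have : ∀ i : Fin n, (∑ j, if k = j ∧ i < j then d i * |A k i| / d k + e k else 0)
              = if i < k then d i * |A k i| / d k + e k else 0 := by
            intro i
            have e2 : ∀ j : Fin n, (if k = j ∧ i < j then d i * |A k i| / d k + e k else 0)
                = if k = j then (if i < j then d i * |A k i| / d k + e k else 0) else 0 := by
              intro j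
              by_cases h : k = j
              · simp [h]
              · simp [h]
            rw [Finset.sum_congr rfl fun j _ => e2 j, Finset.sum_ite_eq]
            simp
          rw [Finset.sum_congr rfl fun i _ => this i]
        rw [hP, hQ, ← Finset.sum_add_distrib]
        have combine : ∀ m : Fin n, ((if k < m then d m * |A k m| / d k + e k else 0)
            + (if m < k then d m * |A k m| / d k + e k else 0))
            = if m ∈ Finset.univ.erase k then d m * |A k m| / d k + e k else 0 := by
          intro m
          rcases lt_trichotomy k m with h | h | h
          · simp [h, h.asymm, Finset.mem_erase, h.ne']
          · simp [h, lt_irrefl]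
          · simp [h, h.asymm, Finset.mem_erase, h.ne]
        rw [Finset.sum_congr rfl fun m _ => combine m, ← Finset.sum_filter,
          Finset.filter_mem_eq_inter, Finset.univ_inter]
        rw [Finset.sum_add_distrib, Finset.sum_const, ← Finset.sum_div]
        have hcard' : ((Finset.univ.erase k).card : ℝ) = (n : ℝ) - 1 := by
          rw [Finset.card_erase_of_mem (Finset.mem_univ k), Finset.card_univ,
            Fintype.card_fin]
          have h1 : 1 ≤ n := le_trans one_le_two hn
          push_cast [Nat.cast_sub h1]
          ring
        rw [nsmul_eq_mul, hcard', hedef]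
        have hdk := hd k
        field_simp
        ring
      · -- off-diagonal entry
        rcases (Ne.lt_or_gt hkl) with hlt | hlt
        · have outer : ∀ i : Fin n, i ≠ k → (∑ j, if i < j then M i j k l else 0) = 0 := by
            intro i hi
            apply Finset.sum_eq_zero
            intro j _
            by_cases h : i < j
            · rw [if_pos h, hM0 i j k l ?_]
              rintro ⟨hk', hl'⟩
              rcases hk' with h1 | h1
              · exact hi h1.symm
              · rcases hl' with h2 | h2
                · subst h1; subst h2; exact absurd hlt (lt_asymm h)
                · exact hkl (h1.trans h2.symm)
            · rw [if_neg h]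
          have inner : ∀ j : Fin n, j ≠ l → (if k < j then M k j k l else 0) = 0 := by
            intro j hj
            by_cases h : k < j
            · rw [if_pos h, hM0 k j k l ?_]
              rintro ⟨hk', hl'⟩
              rcases hl' with h2 | h2
              · exact (ne_of_gt hlt) h2
              · exact hj h2.symm
            · rw [if_neg h]
          rw [Finset.sum_eq_single_of_mem k (Finset.mem_univ k) (fun i _ hi => outer i hi),
            Finset.sum_eq_single_of_mem l (Finset.mem_univ l) (fun j _ hj => inner j hj),
            if_pos hlt, hMij k l (ne_of_lt hlt)]
        · have outer : ∀ i : Fin n, i ≠ l → (∑ j, if i < j then M i j k l else 0) = 0 := by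
            intro i hi
            apply Finset.sum_eq_zero
            intro j _
            by_cases h : i < j
            · rw [if_pos h, hM0 i j k l ?_]
              rintro ⟨hk', hl'⟩
              rcases hl' with h2 | h2
              · exact hi h2.symm
              · rcases hk' with h1 | h1
                · subst h1; subst h2; exact absurd h (lt_asymm hlt)
                · exact hkl (h1.trans h2.symm)
            · rw [if_neg h]
          have inner : ∀ j : Fin n, j ≠ k → (if l < j then M l j k l else 0) = 0 := by
            intro j hj
            by_cases h : l < j
            · rw [if_pos h, hM0 l j k l ?_]
              rintro ⟨hk', hl'⟩
              rcases hk' with h1 | h1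
              · exact hkl h1
              · exact hj h1.symm
            · rw [if_neg h]
          rw [Finset.sum_eq_single_of_mem l (Finset.mem_univ l) (fun i _ hi => outer i hi),
            Finset.sum_eq_single_of_mem k (Finset.mem_univ k) (fun j _ hj => inner j hj),
            if_pos hlt, hMji l k (ne_of_lt hlt), hApp]
  · rintro ⟨M, hMsym, hsupp, hpsd2, hAeq⟩
    have hMs : ∀ i j, i < j → ∀ k l, M i j l k = M i j k l :=
      fun i j h k l => (hMsym i j h).apply k l
    have hent : ∀ k l, A k l = ∑ p, ∑ q, if p < q then M p q k l else 0 := by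
      intro k l
      conv_lhs => rw [hAeq]
      rw [Matrix.sum_apply, pair_sum (fun p q => M p q k l)]
    have hAoffe : ∀ p q : Fin n, p < q → A p q = M p q p q := by
      intro p q hpq
      rw [hent p q]
      have outer : ∀ i : Fin n, i ≠ p → (∑ j, if i < j then M i j p q else 0) = 0 := by
        intro i hi
        apply Finset.sum_eq_zero
        intro j _
        by_cases h : i < j
        · rw [if_pos h, hsupp i j h p q ?_]
          rintro ⟨hk', hl'⟩
          rcases hk' with h1 | h1
          · exact hi h1.symm
          · rcases hl' with h2 | h2
            · subst h1; subst h2; exact absurd hpq (lt_asymm h)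
            · exact (ne_of_lt hpq) (h1.trans h2.symm)
        · rw [if_neg h]
      have inner : ∀ j : Fin n, j ≠ q → (if p < j then M p j p q else 0) = 0 := by
        intro j hj
        by_cases h : p < j
        · rw [if_pos h, hsupp p j h p q ?_]
          rintro ⟨hk', hl'⟩
          rcases hl' with h2 | h2
          · exact (ne_of_gt hpq) h2
          · exact hj h2.symm
        · rw [if_neg h]
      rw [Finset.sum_eq_single_of_mem p (Finset.mem_univ p) (fun i _ hi => outer i hi),
        Finset.sum_eq_single_of_mem q (Finset.mem_univ q) (fun j _ hj => inner j hj),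
        if_pos hpq]
    set Bc : Matrix (Fin n) (Fin n) ℝ :=
      Matrix.of fun k l => if k = l then A k k else -|A k l| with hBc
    have hBce : ∀ k l : Fin n, Bc k l = if k = l then A k k else -|A k l| := fun k l => rfl
    have hBsym : ∀ k l, Bc k l = Bc l k := by
      intro k l
      rw [hBce, hBce]
      by_cases h : k = l
      · subst h; simp
      · rw [if_neg h, if_neg (Ne.symm h), hApp k l]
    have hBoff : ∀ k l, k ≠ l → Bc k l ≤ 0 := by
      intro k l h
      rw [hBce, if_neg h]
      exact neg_nonpos.mpr (abs_nonneg _)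
    have hBpsd : ∀ x : Fin n → ℝ, 0 ≤ ∑ i, ∑ j, x i * Bc i j * x j := by
      intro x
      rw [sum_split (fun i j => x i * Bc i j * x j)]
      have diag : (∑ i, x i * Bc i i * x i)
          = ∑ p, ∑ q, if p < q then x p * M p q p p * x p + x q * M p q q q * x q else 0 := by
        have e1 : ∀ k : Fin n, x k * Bc k k * x k
            = ∑ p, ∑ q, if p < q then x k * M p q k k * x k else 0 := by
          intro k
          rw [hBce, if_pos rfl]
          calc x k * A k k * x k
              = x k * (∑ p, ∑ q, if p < q then M p q k k else 0) * x k := by rw [← hent]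
            _ = ∑ p, ∑ q, if p < q then x k * M p q k k * x k else 0 := by
                rw [Finset.mul_sum, Finset.sum_mul]
                refine Finset.sum_congr rfl fun p _ => ?_
                rw [Finset.mul_sum, Finset.sum_mul]
                refine Finset.sum_congr rfl fun q _ => ?_
                split <;> simp
        rw [Finset.sum_congr rfl fun k _ => e1 k]
        rw [Finset.sum_comm]
        refine Finset.sum_congr rfl fun p _ => ?_
        rw [Finset.sum_comm]
        refine Finset.sum_congr rfl fun q _ => ?_
        by_cases h : p < q
        · simp only [h, if_true]
          exact two_support_sum (fun k => x k * M p q k k * x k) p q (ne_of_lt h)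
            (fun k hk1 hk2 => by
              have h0 := hsupp p q h k k (by tauto)
              simp [h0])
        · simp [h]
      have offd : (∑ i, ∑ j, if i < j then x i * Bc i j * x j + x j * Bc j i * x i else 0)
          = ∑ p, ∑ q, if p < q then -(2 * (x p * x q * |M p q p q|)) else 0 := by
        refine Finset.sum_congr rfl fun p _ => Finset.sum_congr rfl fun q _ => ?_
        by_cases h : p < q
        · simp only [h, if_true]
          have hne := ne_of_lt h
          rw [hBce, hBce, if_neg hne, if_neg (Ne.symm hne), hAoffe p q h,
            hApp, hAoffe p q h]
          ring
        · simp [h]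
      rw [diag, offd, ← Finset.sum_add_distrib]
      apply Finset.sum_nonneg
      intro p _
      rw [← Finset.sum_add_distrib]
      apply Finset.sum_nonneg
      intro q _
      by_cases h : p < q
      · simp only [h, if_true]
        have h1 := hpsd2 p q h (x p) (x q)
        have h2 := hpsd2 p q h (x p) (-(x q))
        have h3 := hMs p q h p q
        rw [h3] at h1 h2
        have h4 : x p * x q * |M p q p q| ≤ |x p * x q * M p q p q| := by
          rw [abs_mul]
          exact mul_le_mul_of_nonneg_right (le_abs_self _) (abs_nonneg _)
        have h6 : |x p * x q * M p q p q|
            ≤ (x p * x p * M p q p p + x q * x q * M p q q q) / 2 := by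
          rw [abs_le]
          constructor <;> nlinarith [h1, h2]
        nlinarith [h4, h6]
      · simp [h]
    obtain ⟨d, hdpos, hdrow⟩ := exists_pos_mulVec_nonneg n Bc hBsym hBoff hBpsd
    refine ⟨d, hdpos, fun i => ?_⟩
    rw [Finset.filter_ne']
    have hde : ∀ k l : Fin n, (Matrix.diagonal d * A * Matrix.diagonal d) k l
        = d k * A k l * d l := by
      intro k l
      rw [Matrix.mul_diagonal, Matrix.diagonal_mul]
    have hrow := hdrow i
    rw [← Finset.sum_erase_add _ _ (Finset.mem_univ i)] at hrow
    have e1 : ∀ j ∈ Finset.univ.erase i, Bc i j * d j = -(|A i j| * d j) := by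
      intro j hj
      rw [hBce, if_neg (Ne.symm (Finset.ne_of_mem_erase hj))]
      ring
    rw [Finset.sum_congr rfl e1, hBce, if_pos rfl] at hrow
    have e2 : ∀ j ∈ Finset.univ.erase i, |(Matrix.diagonal d * A * Matrix.diagonal d) i j|
        = d i * (|A i j| * d j) := by
      intro j hj
      rw [hde, abs_mul, abs_mul, abs_of_pos (hdpos i), abs_of_pos (hdpos j)]
      ring
    rw [Finset.sum_congr rfl e2, ← Finset.mul_sum, hde]
    have h5 : (∑ j ∈ Finset.univ.erase i, |A i j| * d j) ≤ A i i * d i := by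
      rw [Finset.sum_neg_distrib] at hrow
      · linarith
    calc d i * ∑ j ∈ Finset.univ.erase i, |A i j| * d j
        ≤ d i * (A i i * d i) := by
          exact mul_le_mul_of_nonneg_left h5 (hdpos i).le
      _ = d i * A i i * d i := by ring
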